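/- arXiv:math/0305156 — 2 statements merged into one kernel-verified Lean document; each statement's English description precedes it below -/
import Mathlib

section
/- Let k ≥ 1 and let 𝒫 be a partition of {1,…,k}. Then the mixed braid group B_𝒫 ⊆ B_k can be generated by at most k(k−1)/2 elements: there exists a subset S of B_𝒫 with |S| ≤ k(k−1)/2 whose generated subgroup equals B_𝒫. -/
/-- The braid relations on `n` strands. Generators are indexed by `Fin (n-1)`,
with index `i` representing the Artin generator `σ_{i+1}`. -/
def braidRels (n : ℕ) : Set (FreeGroup (Fin (n - 1))) :=
  { r | (∃ i j : Fin (n - 1), (i : ℕ) + 1 = (j : ℕ) ∧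
          r = FreeGroup.of i * FreeGroup.of j * FreeGroup.of i *
              (FreeGroup.of j * FreeGroup.of i * FreeGroup.of j)⁻¹) ∨
        (∃ i j : Fin (n - 1), (i : ℕ) + 2 ≤ (j : ℕ) ∧
          r = FreeGroup.of i * FreeGroup.of j * (FreeGroup.of j * FreeGroup.of i)⁻¹) }

/-- The Artin braid group on `n` strands. -/
def BraidGroup (n : ℕ) : Type := PresentedGroup (braidRels n)

instance (n : ℕ) : Group (BraidGroup n) :=
  inferInstanceAs (Group (PresentedGroup (braidRels n)))

/-- `braidGen n i` is the Artin generator `σ_i ∈ B_n`, for `1 ≤ i ≤ n-1`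
(junk value `1` outside this range). -/
def braidGen (n : ℕ) (i : ℕ) : BraidGroup n :=
  if h : i - 1 < n - 1 then PresentedGroup.of (⟨i - 1, h⟩ : Fin (n - 1)) else 1

private lemma swap_braid {α : Type*} [DecidableEq α] {a b c : α}
    (hab : a ≠ b) (hac : a ≠ c) (hbc : b ≠ c) :
    Equiv.swap a b * Equiv.swap b c * Equiv.swap a b =
      Equiv.swap b c * Equiv.swap a b * Equiv.swap b c :=
  calc Equiv.swap a b * Equiv.swap b c * Equiv.swap a b
      = Equiv.swap b a * Equiv.swap c b * Equiv.swap b a := by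
        rw [Equiv.swap_comm a b, Equiv.swap_comm b c]
    _ = Equiv.swap a c := Equiv.swap_mul_swap_mul_swap hbc.symm hac.symm
    _ = Equiv.swap c a := Equiv.swap_comm a c
    _ = Equiv.swap b c * Equiv.swap a b * Equiv.swap b c :=
        (Equiv.swap_mul_swap_mul_swap hab hac).symm

private lemma swap_commute {α : Type*} [DecidableEq α] {a b c d : α}
    (h1 : a ≠ c) (h2 : a ≠ d) (h3 : b ≠ c) (h4 : b ≠ d) :
    Commute (Equiv.swap a b) (Equiv.swap c d) := by
  apply Equiv.Perm.Disjoint.commute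
  intro x
  by_cases hx : x = a ∨ x = b
  · right
    rcases hx with rfl | rfl
    · exact Equiv.swap_apply_of_ne_of_ne h1 h2
    · exact Equiv.swap_apply_of_ne_of_ne h3 h4
  · left
    push_neg at hx
    exact Equiv.swap_apply_of_ne_of_ne hx.1 hx.2

/-- The canonical projection `B_n → S_n` sending `σ_i` to the transposition `(i, i+1)`. -/
def braidPermHom (n : ℕ) : BraidGroup n →* Equiv.Perm (Fin n) :=
  PresentedGroup.toGroup
    (f := fun i : Fin (n - 1) =>
      Equiv.swap (⟨i.val, by have := i.isLt; omega⟩ : Fin n)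
        (⟨i.val + 1, by have := i.isLt; omega⟩ : Fin n))
    (by
      rintro r (⟨⟨i, hi⟩, ⟨j, hj⟩, hij, rfl⟩ | ⟨⟨i, hi⟩, ⟨j, hj⟩, hij, rfl⟩) <;>
        simp only [map_mul, map_inv, FreeGroup.lift_apply_of, mul_inv_eq_one]
      · subst hij
        exact swap_braid (by simp only [ne_eq, Fin.mk.injEq, Fin.val_mk]; omega)
          (by simp only [ne_eq, Fin.mk.injEq, Fin.val_mk]; omega)
          (by simp only [ne_eq, Fin.mk.injEq, Fin.val_mk]; omega)
      · simp only [Fin.val_mk] at hij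
        exact (swap_commute (by simp only [ne_eq, Fin.mk.injEq, Fin.val_mk]; omega)
          (by simp only [ne_eq, Fin.mk.injEq, Fin.val_mk]; omega)
          (by simp only [ne_eq, Fin.mk.injEq, Fin.val_mk]; omega)
          (by simp only [ne_eq, Fin.mk.injEq, Fin.val_mk]; omega)).eq)

/-- The Birman–Ko–Lee element `δ_(n) = σ_1 σ_2 ⋯ σ_{n-1} ∈ B_n`. -/
def braidDelta (n : ℕ) : BraidGroup n :=
  ((List.range (n - 1)).map (fun j => braidGen n (j + 1))).prod

/-- The element `γ_(n) = σ_1 σ_2 ⋯ σ_{n-1} σ_1 ∈ B_n`. -/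
def braidGamma (n : ℕ) : BraidGroup n := braidDelta n * braidGen n 1

/-- Garside's half twist `Δ = (σ_1)(σ_2 σ_1) ⋯ (σ_{n-1} σ_{n-2} ⋯ σ_1) ∈ B_n`. -/
def halfTwist (n : ℕ) : BraidGroup n :=
  ((List.range (n - 1)).map
    (fun r => (((List.range (r + 1)).reverse).map (fun j => braidGen n (j + 1))).prod)).prod

/-- A braid is periodic if some positive power of it is a power of the full twist `Δ²`. -/
def IsPeriodicBraid {n : ℕ} (β : BraidGroup n) : Prop :=
  ∃ m : ℕ, 1 ≤ m ∧ ∃ l : ℤ, β ^ m = halfTwist n ^ (2 * l)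

/-- The pure braid group on `n` strands: the kernel of the projection `B_n → S_n`. -/
def pureBraidGroup (n : ℕ) : Subgroup (BraidGroup n) := (braidPermHom n).ker

/-- The annular braid group on `d` strands, identified with the subgroup of `B_{d+1}`
of braids whose permutation fixes the last strand. -/
def annularBraidGroup (d : ℕ) : Subgroup (BraidGroup (d + 1)) :=
  Subgroup.comap (braidPermHom (d + 1))
    (MulAction.stabilizer (Equiv.Perm (Fin (d + 1))) (Fin.last d))

/-- The mixed braid group associated to a partition (setoid) `P` of the strands:
braids whose permutation preserves each block of `P`. -/
def mixedBraidGroup {k : ℕ} (P : Setoid (Fin k)) : Subgroup (BraidGroup k) where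
  carrier := {α | ∀ x, P.r ((braidPermHom k α) x) x}
  one_mem' := by intro x; simp only [map_one, Equiv.Perm.coe_one, id_eq]; exact P.refl x
  mul_mem' := by
    intro a b ha hb x
    simp only [map_mul, Equiv.Perm.mul_apply]
    exact P.trans (ha ((braidPermHom k b) x)) (hb x)
  inv_mem' := by
    intro a ha x
    have := ha ((braidPermHom k a)⁻¹ x)
    simp only [map_inv] at *
    simpa using P.symm this

namespace MixedBraid

/-- The `i`-th Artin generator (0-indexed), junk value `1` when `i ≥ n-1`. -/
def s (n : ℕ) (i : ℕ) : BraidGroup n := braidGen n (i + 1)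

lemma s_def {n : ℕ} (i : ℕ) (h : i < n - 1) :
    s n i = PresentedGroup.of (⟨i, h⟩ : Fin (n-1)) := by
  simp only [s, braidGen, Nat.add_sub_cancel]
  exact dif_pos (by omega)

lemma s_oob {n : ℕ} (i : ℕ) (h : ¬ i < n - 1) : s n i = 1 := by
  simp [s, braidGen, h]

lemma rel_one {n : ℕ} {r : FreeGroup (Fin (n-1))} (hr : r ∈ braidRels n) :
    (PresentedGroup.mk (braidRels n) r : BraidGroup n) = 1 := by
  have : r ∈ Subgroup.normalClosure (braidRels n) := Subgroup.subset_normalClosure hr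
  exact (QuotientGroup.eq_one_iff r).2 this

lemma braid_rel {n : ℕ} {i : ℕ} (h : i + 1 < n - 1) :
    s n i * s n (i+1) * s n i = s n (i+1) * s n i * s n (i+1) := by
  have hi : i < n - 1 := by omega
  have key := rel_one (n := n) (r := FreeGroup.of (⟨i, hi⟩ : Fin (n-1)) *
      FreeGroup.of (⟨i+1, h⟩ : Fin (n-1)) * FreeGroup.of (⟨i, hi⟩ : Fin (n-1)) *
      (FreeGroup.of (⟨i+1, h⟩ : Fin (n-1)) * FreeGroup.of (⟨i, hi⟩ : Fin (n-1)) *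
        FreeGroup.of (⟨i+1, h⟩ : Fin (n-1)))⁻¹)
    (Or.inl ⟨⟨i, hi⟩, ⟨i+1, h⟩, rfl, rfl⟩)
  rw [s_def i hi, s_def (i+1) h]
  simp only [map_mul, map_inv, mul_inv_eq_one] at key
  exact key

lemma comm_rel {n : ℕ} {i j : ℕ} (h : i + 2 ≤ j) : Commute (s n i) (s n j) := by
  by_cases hj : j < n - 1
  · have hi : i < n - 1 := by omega
    have key := rel_one (n := n) (r := FreeGroup.of (⟨i, hi⟩ : Fin (n-1)) *
        FreeGroup.of (⟨j, hj⟩ : Fin (n-1)) *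
        (FreeGroup.of (⟨j, hj⟩ : Fin (n-1)) * FreeGroup.of (⟨i, hi⟩ : Fin (n-1)))⁻¹)
      (Or.inr ⟨⟨i, hi⟩, ⟨j, hj⟩, h, rfl⟩)
    rw [s_def i hi, s_def j hj]
    simp only [map_mul, map_inv, mul_inv_eq_one] at key
    exact key
  · rw [s_oob j hj]; exact Commute.one_right _

lemma perm_s {n : ℕ} (i : ℕ) (h : i < n - 1) :
    braidPermHom n (s n i) =
      Equiv.swap (⟨i, by omega⟩ : Fin n) (⟨i+1, by omega⟩ : Fin n) := by
  rw [s_def i h]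
  exact PresentedGroup.toGroup.of _

end MixedBraid
namespace MixedBraid

/-- `wword n i j = σ_{j-1} σ_{j-2} ⋯ σ_{i+1}` (0-indexed). -/
def wword (n i j : ℕ) : BraidGroup n :=
  (((List.range' (i+1) (j-1-i)).reverse).map (s n)).prod

/-- The band generator `a_{ij}` with `π(a_{ij}) = (i j)`. -/
def aband (n i j : ℕ) : BraidGroup n := wword n i j * s n i * (wword n i j)⁻¹

/-- The pure-braid generator `A_{ij} = a_{ij}²`. -/
def Agen (n i j : ℕ) : BraidGroup n := aband n i j ^ 2

lemma w_nil {n : ℕ} (i j : ℕ) (h : j ≤ i + 1) : wword n i j = 1 := by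
  simp [wword, Nat.sub_eq_zero_of_le (by omega : j - 1 ≤ i)]

lemma w_succ {n : ℕ} (i j : ℕ) (h : i + 1 ≤ j) :
    wword n i (j+1) = s n j * wword n i j := by
  have : j + 1 - 1 - i = (j - 1 - i) + 1 := by omega
  rw [wword, this, List.range'_1_concat]
  have : i + 1 + (j - 1 - i) = j := by omega
  rw [this]
  simp [wword]

lemma w_peel {n : ℕ} (i j : ℕ) (h : i + 2 ≤ j) :
    wword n i j = wword n (i+1) j * s n (i+1) := by
  have h1 : j - 1 - i = (j - 1 - (i+1)) + 1 := by omega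
  rw [wword, h1, List.range'_succ]
  simp [wword, Nat.add_comm]

lemma aband_base {n : ℕ} (i : ℕ) : aband n i (i+1) = s n i := by
  simp [aband, w_nil i (i+1) le_rfl]

lemma Agen_base {n : ℕ} (i : ℕ) : Agen n i (i+1) = (s n i)^2 := by
  rw [Agen, aband_base]

lemma Agen_eq {n : ℕ} (i j : ℕ) :
    Agen n i j = wword n i j * (s n i)^2 * (wword n i j)⁻¹ := by
  rw [Agen, aband, sq, sq]; group

lemma comm_w {n : ℕ} {t i j : ℕ}
    (h : ∀ r, i + 1 ≤ r → r + 1 ≤ j → Commute (s n t) (s n r)) :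
    Commute (s n t) (wword n i j) := by
  apply Commute.list_prod_right
  intro x hx
  simp only [List.mem_map, List.mem_reverse, List.mem_range'_1] at hx
  obtain ⟨r, ⟨hr1, hr2⟩, rfl⟩ := hx
  exact h r hr1 (by omega)

lemma comm_aband {n : ℕ} {t i j : ℕ} (hij : i + 1 ≤ j) (h : t + 2 ≤ i ∨ j + 1 ≤ t) :
    Commute (s n t) (aband n i j) := by
  have hw : Commute (s n t) (wword n i j) := by
    apply comm_w; intro r hr1 hr2
    rcases h with h | h
    · exact comm_rel (by omega)
    · exact (comm_rel (by omega)).symm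
  have hi : Commute (s n t) (s n i) := by
    rcases h with h | h
    · exact comm_rel (by omega)
    · exact (comm_rel (by omega)).symm
  exact (hw.mul_right hi).mul_right hw.inv_right

/-- Interior lemma: for `i+1 ≤ t ≤ j-2`, `σ_t · w_{ij} = w_{ij} · σ_{t+1}`. -/
lemma w_semiconj {n : ℕ} {t i j : ℕ} (h1 : i + 1 ≤ t) (h2 : t + 2 ≤ j) (h3 : j ≤ n - 1) :
    s n t * wword n i j = wword n i j * s n (t+1) := by
  induction j, h2 using Nat.le_induction with
  | base =>
    -- j = t+2 : σ_t (σ_{t+1} w_{i,t+1}) = (σ_{t+1} w_{i,t+1}) σ_{t+1}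
    rw [w_succ i (t+1) (by omega)]
    rw [w_succ i t (by omega)]
    have hcw : Commute (s n (t+1)) (wword n i t) := by
      apply comm_w; intro r hr1 hr2; exact (comm_rel (by omega)).symm
    have hb : s n t * s n (t+1) * s n t = s n (t+1) * s n t * s n (t+1) :=
      braid_rel (by omega)
    calc s n t * (s n (t+1) * (s n t * wword n i t))
        = (s n t * s n (t+1) * s n t) * wword n i t := by group
      _ = (s n (t+1) * s n t * s n (t+1)) * wword n i t := by rw [hb]
      _ = (s n (t+1) * s n t) * (s n (t+1) * wword n i t) := by group
      _ = (s n (t+1) * s n t) * (wword n i t * s n (t+1)) := by rw [hcw.eq]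
      _ = s n (t+1) * (s n t * wword n i t) * s n (t+1) := by group
  | succ j hj ih =>
    rw [w_succ i j (by omega)]
    have hc : Commute (s n t) (s n j) := comm_rel (by omega)
    calc s n t * (s n j * wword n i j)
        = s n j * (s n t * wword n i j) := by rw [← mul_assoc, hc.eq, mul_assoc]
      _ = s n j * (wword n i j * s n (t+1)) := by rw [ih (by omega)]
      _ = s n j * wword n i j * s n (t+1) := by group

lemma comm_aband_interior {n : ℕ} {t i j : ℕ} (h1 : i + 1 ≤ t) (h2 : t + 2 ≤ j)
    (h3 : j ≤ n - 1) : Commute (s n t) (aband n i j) := by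
  have hw := w_semiconj h1 h2 h3
  have hc : Commute (s n (t+1)) (s n i) := (comm_rel (by omega)).symm
  have hw' : s n (t+1) * (wword n i j)⁻¹ = (wword n i j)⁻¹ * s n t := by
    calc s n (t+1) * (wword n i j)⁻¹
        = (wword n i j)⁻¹ * (wword n i j * s n (t+1)) * (wword n i j)⁻¹ := by group
      _ = (wword n i j)⁻¹ * (s n t * wword n i j) * (wword n i j)⁻¹ := by rw [hw]
      _ = (wword n i j)⁻¹ * s n t := by group
  show s n t * aband n i j = aband n i j * s n t
  rw [aband]
  calc s n t * (wword n i j * s n i * (wword n i j)⁻¹)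
      = (s n t * wword n i j) * s n i * (wword n i j)⁻¹ := by group
    _ = (wword n i j * s n (t+1)) * s n i * (wword n i j)⁻¹ := by rw [hw]
    _ = wword n i j * (s n (t+1) * s n i) * (wword n i j)⁻¹ := by group
    _ = wword n i j * (s n i * s n (t+1)) * (wword n i j)⁻¹ := by rw [hc.eq]
    _ = wword n i j * s n i * (s n (t+1) * (wword n i j)⁻¹) := by group
    _ = wword n i j * s n i * ((wword n i j)⁻¹ * s n t) := by rw [hw']
    _ = wword n i j * s n i * (wword n i j)⁻¹ * s n t := by group

/-- `σ_i a_{i,j} σ_i⁻¹ = a_{i+1,j}` (as a semiconjugation). -/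
lemma semiconj_aband_left {n : ℕ} {i j : ℕ} (hij : i + 2 ≤ j) (hjn : j ≤ n - 1) :
    SemiconjBy (s n i) (aband n i j) (aband n (i+1) j) := by
  have hb : s n i * s n (i+1) * s n i = s n (i+1) * s n i * s n (i+1) :=
    braid_rel (by omega)
  have hw : Commute (s n i) (wword n (i+1) j) := by
    apply comm_w; intro r hr1 hr2; exact comm_rel (by omega)
  show s n i * aband n i j = aband n (i+1) j * s n i
  rw [aband, aband, w_peel i j hij]
  calc s n i * (wword n (i+1) j * s n (i+1) * s n i * (wword n (i+1) j * s n (i+1))⁻¹)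
      = (s n i * wword n (i+1) j) * (s n (i+1) * s n i * (s n (i+1))⁻¹) *
          (wword n (i+1) j)⁻¹ := by group
    _ = (wword n (i+1) j * s n i) * (s n (i+1) * s n i * (s n (i+1))⁻¹) *
          (wword n (i+1) j)⁻¹ := by rw [hw.eq]
    _ = wword n (i+1) j * (s n i * s n (i+1) * s n i) * (s n (i+1))⁻¹ *
          (wword n (i+1) j)⁻¹ := by group
    _ = wword n (i+1) j * (s n (i+1) * s n i * s n (i+1)) * (s n (i+1))⁻¹ *
          (wword n (i+1) j)⁻¹ := by rw [hb]
    _ = wword n (i+1) j * s n (i+1) * (s n i * (wword n (i+1) j)⁻¹) := by group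
    _ = wword n (i+1) j * s n (i+1) * ((wword n (i+1) j)⁻¹ * s n i) := by
          rw [hw.inv_right.eq]
    _ = wword n (i+1) j * s n (i+1) * (wword n (i+1) j)⁻¹ * s n i := by group

/-- `σ_{j} a_{i,j} σ_{j}⁻¹ = a_{i,j+1}` (as a semiconjugation). -/
lemma semiconj_aband_right {n : ℕ} {i j : ℕ} (hij : i + 1 ≤ j) :
    SemiconjBy (s n j) (aband n i j) (aband n i (j+1)) := by
  show s n j * aband n i j = aband n i (j+1) * s n j
  rw [aband, aband, w_succ i j hij]
  group

end MixedBraid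
namespace MixedBraid

/-- The generating set `{A_{ij} : i < j ≤ n-1}` of the pure braid group. -/
def ASet (n : ℕ) : Set (BraidGroup n) :=
  {x | ∃ i j : ℕ, i < j ∧ j ≤ n - 1 ∧ x = Agen n i j}

/-- The subgroup generated by the `A_{ij}`; it will be shown to equal the pure braid group. -/
def HP (n : ℕ) : Subgroup (BraidGroup n) := Subgroup.closure (ASet n)

lemma Agen_mem {n i j : ℕ} (hij : i < j) (hj : j ≤ n - 1) : Agen n i j ∈ HP n :=
  Subgroup.subset_closure ⟨i, j, hij, hj, rfl⟩

lemma semiconj_Agen_left {n : ℕ} {i j : ℕ} (hij : i + 2 ≤ j) (hjn : j ≤ n - 1) :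
    SemiconjBy (s n i) (Agen n i j) (Agen n (i+1) j) :=
  (semiconj_aband_left hij hjn).pow_right 2

lemma semiconj_Agen_right {n : ℕ} {i j : ℕ} (hij : i + 1 ≤ j) :
    SemiconjBy (s n j) (Agen n i j) (Agen n i (j+1)) :=
  (semiconj_aband_right hij).pow_right 2

lemma mem_of_semiconj_fwd {n t i j : ℕ} {y : BraidGroup n}
    (h : SemiconjBy (s n t) (Agen n i j) y) (hy : y ∈ HP n) (ht : t < n - 1) :
    s n t * Agen n i j * (s n t)⁻¹ ∈ HP n ∧ (s n t)⁻¹ * Agen n i j * s n t ∈ HP n := by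
  have hplus : s n t * Agen n i j * (s n t)⁻¹ = y := by
    rw [h.eq]; group
  have hA : Agen n i j = (s n t)⁻¹ * (y * s n t) := by rw [← h.eq]; group
  have hminus : (s n t)⁻¹ * Agen n i j * s n t
      = (Agen n t (t+1))⁻¹ * y * Agen n t (t+1) := by
    rw [hA, Agen_base, sq]; group
  refine ⟨hplus ▸ hy, hminus ▸ ?_⟩
  exact mul_mem (mul_mem (inv_mem (Agen_mem (by omega) (by omega))) hy)
    (Agen_mem (by omega) (by omega))

lemma mem_of_semiconj_bwd {n t i j : ℕ} {x : BraidGroup n}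
    (h : SemiconjBy (s n t) x (Agen n i j)) (hx : x ∈ HP n) (ht : t < n - 1) :
    s n t * Agen n i j * (s n t)⁻¹ ∈ HP n ∧ (s n t)⁻¹ * Agen n i j * s n t ∈ HP n := by
  have hA : Agen n i j = s n t * x * (s n t)⁻¹ := by rw [h.eq]; group
  have hminus : (s n t)⁻¹ * Agen n i j * s n t = x := by
    rw [hA]; group
  have hplus : s n t * Agen n i j * (s n t)⁻¹
      = Agen n t (t+1) * x * (Agen n t (t+1))⁻¹ := by
    rw [hA, Agen_base, sq]; group
  refine ⟨hplus ▸ ?_, hminus ▸ hx⟩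
  exact mul_mem (mul_mem (Agen_mem (by omega) (by omega)) hx)
    (inv_mem (Agen_mem (by omega) (by omega)))

lemma mem_of_commute {n t i j : ℕ}
    (h : Commute (s n t) (Agen n i j)) (hA : Agen n i j ∈ HP n) :
    s n t * Agen n i j * (s n t)⁻¹ ∈ HP n ∧ (s n t)⁻¹ * Agen n i j * s n t ∈ HP n := by
  have h1 : s n t * Agen n i j * (s n t)⁻¹ = Agen n i j := by rw [h.eq]; group
  have h2 : (s n t)⁻¹ * Agen n i j * s n t = Agen n i j := by
    rw [mul_assoc, ← h.eq]; group
  exact ⟨by rw [h1]; exact hA, by rw [h2]; exact hA⟩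

lemma conj_Agen_mem {n : ℕ} (t : ℕ) {i j : ℕ} (hij : i < j) (hj : j ≤ n - 1) :
    s n t * Agen n i j * (s n t)⁻¹ ∈ HP n ∧ (s n t)⁻¹ * Agen n i j * s n t ∈ HP n := by
  have hAmem : Agen n i j ∈ HP n := Agen_mem hij hj
  by_cases ht : t < n - 1
  · have hcase : t + 2 ≤ i ∨ t + 1 = i ∨ (t = i ∧ j = i + 1) ∨ (t = i ∧ i + 2 ≤ j) ∨
        (i + 1 ≤ t ∧ t + 2 ≤ j) ∨ (t + 1 = j ∧ i + 1 ≤ t) ∨ t = j ∨ j + 1 ≤ t := by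
      omega
    rcases hcase with h | h | ⟨rfl, rfl⟩ | ⟨rfl, h⟩ | ⟨h1, h2⟩ | ⟨h1, h2⟩ | rfl | h
    · exact mem_of_commute ((comm_aband (by omega) (Or.inl h)).pow_right 2) hAmem
    · subst h
      exact mem_of_semiconj_bwd (semiconj_Agen_left (by omega) hj)
        (Agen_mem (by omega) hj) ht
    · have : Agen n t (t+1) = (s n t)^2 := Agen_base t
      refine mem_of_commute ?_ hAmem
      rw [this]
      exact (Commute.refl (s n t)).pow_right 2
    · exact mem_of_semiconj_fwd (semiconj_Agen_left h hj)
        (Agen_mem (by omega) hj) ht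
    · exact mem_of_commute ((comm_aband_interior h1 h2 hj).pow_right 2) hAmem
    · have hjt : j = t + 1 := h1.symm
      subst hjt
      exact mem_of_semiconj_bwd (semiconj_Agen_right h2)
        (Agen_mem (by omega) (by omega)) ht
    · exact mem_of_semiconj_fwd (semiconj_Agen_right (by omega))
        (Agen_mem (by omega) (by omega)) ht
    · exact mem_of_commute ((comm_aband (by omega) (Or.inr h)).pow_right 2) hAmem
  · rw [s_oob t ht]
    simpa using hAmem

lemma conj_mem_HP {n : ℕ} (t : ℕ) {h : BraidGroup n} (hh : h ∈ HP n) :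
    s n t * h * (s n t)⁻¹ ∈ HP n ∧ (s n t)⁻¹ * h * s n t ∈ HP n := by
  induction hh using Subgroup.closure_induction with
  | mem x hx =>
    obtain ⟨i, j, hij, hj, rfl⟩ := hx
    exact conj_Agen_mem t hij hj
  | one =>
    constructor
    · have : s n t * 1 * (s n t)⁻¹ = 1 := by group
      rw [this]; exact one_mem _
    · have : (s n t)⁻¹ * 1 * s n t = 1 := by group
      rw [this]; exact one_mem _
  | mul x y _ _ hx hy =>
    constructor
    · have : s n t * (x * y) * (s n t)⁻¹
          = (s n t * x * (s n t)⁻¹) * (s n t * y * (s n t)⁻¹) := by group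
      rw [this]; exact mul_mem hx.1 hy.1
    · have : (s n t)⁻¹ * (x * y) * s n t
          = ((s n t)⁻¹ * x * s n t) * ((s n t)⁻¹ * y * s n t) := by group
      rw [this]; exact mul_mem hx.2 hy.2
  | inv x _ hx =>
    constructor
    · have : s n t * x⁻¹ * (s n t)⁻¹ = (s n t * x * (s n t)⁻¹)⁻¹ := by group
      rw [this]; exact inv_mem hx.1
    · have : (s n t)⁻¹ * x⁻¹ * s n t = ((s n t)⁻¹ * x * s n t)⁻¹ := by group
      rw [this]; exact inv_mem hx.2

lemma HP_normal (n : ℕ) : (HP n).Normal := by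
  constructor
  intro h hh g
  have hg : g ∈ Subgroup.closure (G := BraidGroup n)
      (Set.range (PresentedGroup.of : Fin (n-1) → BraidGroup n)) := by
    have := Subgroup.mem_top (G := PresentedGroup (braidRels n)) g
    rw [← PresentedGroup.closure_range_of] at this; exact this
  revert h
  have key : ∀ h ∈ HP n, g * h * g⁻¹ ∈ HP n ∧ g⁻¹ * h * g ∈ HP n := by
    induction hg using Subgroup.closure_induction with
    | mem x hx =>
      obtain ⟨a, rfl⟩ := hx
      intro h hh
      have hs : (PresentedGroup.of a : BraidGroup n) = s n (a : ℕ) := by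
        rw [s_def (a : ℕ) a.isLt]
      rw [hs]
      exact conj_mem_HP (a : ℕ) hh
    | one =>
      intro h hh
      constructor
      · have : (1 : BraidGroup n) * h * 1⁻¹ = h := by group
        rw [this]; exact hh
      · have : (1 : BraidGroup n)⁻¹ * h * 1 = h := by group
        rw [this]; exact hh
    | mul x y _ _ hx hy =>
      intro h hh
      constructor
      · have : x * y * h * (x * y)⁻¹ = x * (y * h * y⁻¹) * x⁻¹ := by group
        rw [this]; exact (hx _ ((hy h hh).1)).1
      · have : (x * y)⁻¹ * h * (x * y) = y⁻¹ * (x⁻¹ * h * x) * y := by group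
        rw [this]; exact (hy _ ((hx h hh).2)).2
    | inv x _ hx =>
      intro h hh
      refine ⟨?_, ?_⟩
      · have : x⁻¹ * h * x⁻¹⁻¹ = x⁻¹ * h * x := by group
        rw [this]; exact (hx h hh).2
      · have : x⁻¹⁻¹ * h * x⁻¹ = x * h * x⁻¹ := by group
        rw [this]; exact (hx h hh).1
  intro h hh
  exact (key h hh).1

end MixedBraid
namespace MixedBraid

/-- Relations of the symmetric group: braid relations plus squares of generators. -/
def symRels (n : ℕ) : Set (FreeGroup (Fin (n-1))) :=
  braidRels n ∪ {r | ∃ i : Fin (n-1), r = FreeGroup.of i * FreeGroup.of i}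

/-- The Coxeter presentation of the symmetric group on `n` letters. -/
def SymPres (n : ℕ) : Type := PresentedGroup (symRels n)

instance (n : ℕ) : Group (SymPres n) := inferInstanceAs (Group (PresentedGroup _))

/-- The generators of `SymPres n` (junk value `1` out of range). -/
def q (n : ℕ) (i : ℕ) : SymPres n :=
  if h : i < n - 1 then PresentedGroup.of ⟨i, h⟩ else 1

lemma q_def {n : ℕ} (i : ℕ) (h : i < n - 1) :
    q n i = PresentedGroup.of (⟨i, h⟩ : Fin (n-1)) := by
  simp only [q]; exact dif_pos h

lemma q_rel_one {n : ℕ} {r : FreeGroup (Fin (n-1))} (hr : r ∈ symRels n) :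
    (PresentedGroup.mk (symRels n) r : SymPres n) = 1 :=
  (QuotientGroup.eq_one_iff r).2 (Subgroup.subset_normalClosure hr)

lemma q_braid {n : ℕ} {i : ℕ} (h : i + 1 < n - 1) :
    q n i * q n (i+1) * q n i = q n (i+1) * q n i * q n (i+1) := by
  have hi : i < n - 1 := by omega
  have key := q_rel_one (n := n) (r := FreeGroup.of (⟨i, hi⟩ : Fin (n-1)) *
      FreeGroup.of (⟨i+1, h⟩ : Fin (n-1)) * FreeGroup.of (⟨i, hi⟩ : Fin (n-1)) *
      (FreeGroup.of (⟨i+1, h⟩ : Fin (n-1)) * FreeGroup.of (⟨i, hi⟩ : Fin (n-1)) *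
        FreeGroup.of (⟨i+1, h⟩ : Fin (n-1)))⁻¹)
    (Or.inl (Or.inl ⟨⟨i, hi⟩, ⟨i+1, h⟩, rfl, rfl⟩))
  rw [q_def i hi, q_def (i+1) h]
  simp only [map_mul, map_inv, mul_inv_eq_one] at key
  exact key

lemma q_comm {n : ℕ} {i j : ℕ} (h : i + 2 ≤ j) : Commute (q n i) (q n j) := by
  by_cases hj : j < n - 1
  · have hi : i < n - 1 := by omega
    have key := q_rel_one (n := n) (r := FreeGroup.of (⟨i, hi⟩ : Fin (n-1)) *
        FreeGroup.of (⟨j, hj⟩ : Fin (n-1)) *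
        (FreeGroup.of (⟨j, hj⟩ : Fin (n-1)) * FreeGroup.of (⟨i, hi⟩ : Fin (n-1)))⁻¹)
      (Or.inl (Or.inr ⟨⟨i, hi⟩, ⟨j, hj⟩, h, rfl⟩))
    rw [q_def i hi, q_def j hj]
    simp only [map_mul, map_inv, mul_inv_eq_one] at key
    exact key
  · rw [(by simp [q, hj] : q n j = 1)]; exact Commute.one_right _

lemma q_sq {n : ℕ} (i : ℕ) : q n i * q n i = 1 := by
  by_cases h : i < n - 1
  · have key := q_rel_one (n := n)
      (r := FreeGroup.of (⟨i, h⟩ : Fin (n-1)) * FreeGroup.of (⟨i, h⟩ : Fin (n-1)))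
      (Or.inr ⟨⟨i, h⟩, rfl⟩)
    rw [q_def i h]
    simp only [map_mul] at key; exact key
  · simp [q, h]

lemma q_inv {n : ℕ} (i : ℕ) : (q n i)⁻¹ = q n i :=
  inv_eq_of_mul_eq_one_right (q_sq i)

/-- The inclusion `SymPres n → SymPres (n+1)`. -/
def symStep (n : ℕ) : SymPres n →* SymPres (n+1) :=
  PresentedGroup.toGroup (f := fun i : Fin (n-1) => q (n+1) (i : ℕ)) (by
    rintro r ((⟨i, j, hij, rfl⟩ | ⟨i, j, hij, rfl⟩) | ⟨i, rfl⟩) <;>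
      simp only [map_mul, map_inv, FreeGroup.lift_apply_of, mul_inv_eq_one]
    · have hj : (j : ℕ) < n - 1 := j.isLt
      rw [← hij]
      exact q_braid (by omega)
    · exact (q_comm hij).eq
    · exact q_sq _)

lemma symStep_of {n : ℕ} (x : Fin (n-1)) :
    symStep n (PresentedGroup.of x) = q (n+1) (x : ℕ) :=
  PresentedGroup.toGroup.of _

lemma q_mem_range {n : ℕ} {t : ℕ} (ht : t < n - 1) :
    q (n+1) t ∈ (symStep n).range := by
  refine ⟨PresentedGroup.of (⟨t, ht⟩ : Fin (n-1)), ?_⟩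
  rw [symStep_of]

/-- Coset representatives: `dword n m = q_{n-m} q_{n-m+1} ⋯ q_{n-1}`. -/
def dword (n m : ℕ) : SymPres (n+1) := ((List.range' (n-m) m).map (q (n+1))).prod

lemma d_zero (n : ℕ) : dword n 0 = 1 := by simp [dword]

lemma d_succ {n m : ℕ} (h : m + 1 ≤ n) :
    dword n (m+1) = q (n+1) (n-m-1) * dword n m := by
  have h1 : n - (m+1) = n - m - 1 := by omega
  have h2 : n - m - 1 + 1 = n - m := by omega
  rw [dword, h1, List.range'_succ, h2]
  simp [dword]

lemma q_comm_d {n t m : ℕ} (h : t + 2 ≤ n - m) :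
    Commute (q (n+1) t) (dword n m) := by
  apply Commute.list_prod_right
  intro x hx
  simp only [List.mem_map, List.mem_range'_1] at hx
  obtain ⟨r, ⟨hr1, hr2⟩, rfl⟩ := hx
  exact q_comm (by omega)

lemma d_semiconj {n : ℕ} : ∀ m, m ≤ n → ∀ t, n - m < t → t ≤ n - 1 →
    q (n+1) t * dword n m = dword n m * q (n+1) (t-1) := by
  intro m
  induction m using Nat.strong_induction_on with
  | _ m ih =>
    intro hm t ht1 ht2
    obtain ⟨m', rfl⟩ : ∃ m', m = m' + 1 := ⟨m - 1, by omega⟩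
    rw [d_succ (by omega)]
    rcases (by omega : n - m' < t ∨ t = n - m') with hlt | heq
    · have hc : Commute (q (n+1) t) (q (n+1) (n - m' - 1)) := (q_comm (by omega)).symm
      rw [← mul_assoc, hc.eq, mul_assoc, ih m' (by omega) (by omega) t hlt ht2,
        ← mul_assoc]
    · have ht0 : 1 ≤ t := by omega
      obtain ⟨m'', rfl⟩ : ∃ m'', m' = m'' + 1 := ⟨m' - 1, by omega⟩
      have e1 : n - (m''+1) - 1 = t - 1 := by omega
      have e2 : n - m'' - 1 = t := by omega
      rw [d_succ (by omega : m'' + 1 ≤ n), e1, e2]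
      have hb : q (n+1) (t-1) * q (n+1) t * q (n+1) (t-1)
          = q (n+1) t * q (n+1) (t-1) * q (n+1) t := by
        obtain ⟨u, rfl⟩ : ∃ u, t = u + 1 := ⟨t - 1, by omega⟩
        simpa using q_braid (n := n+1) (i := u) (by omega)
      have hcd : Commute (q (n+1) (t-1)) (dword n m'') := q_comm_d (by omega)
      calc q (n+1) t * (q (n+1) (t-1) * (q (n+1) t * dword n m''))
          = (q (n+1) t * q (n+1) (t-1) * q (n+1) t) * dword n m'' := by group
        _ = (q (n+1) (t-1) * q (n+1) t * q (n+1) (t-1)) * dword n m'' := by rw [← hb]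
        _ = (q (n+1) (t-1) * q (n+1) t) * (q (n+1) (t-1) * dword n m'') := by group
        _ = (q (n+1) (t-1) * q (n+1) t) * (dword n m'' * q (n+1) (t-1)) := by
              rw [hcd.eq]
        _ = q (n+1) (t-1) * (q (n+1) t * dword n m'') * q (n+1) (t-1) := by group

end MixedBraid
namespace MixedBraid

lemma q_mul_coset {n : ℕ} {t m : ℕ} (ht : t < n) (hm : m ≤ n) :
    ∃ m' ≤ n, ∃ k ∈ (symStep n).range, q (n+1) t * dword n m = dword n m' * k := by
  rcases (by omega : t + 2 ≤ n - m ∨ t + 1 = n - m ∨ (t = n - m ∧ 1 ≤ m) ∨ n - m < t)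
    with h | h | ⟨h, hm1⟩ | h
  · exact ⟨m, hm, q (n+1) t, q_mem_range (by omega), (q_comm_d h).eq⟩
  · refine ⟨m + 1, by omega, 1, one_mem _, ?_⟩
    rw [mul_one, d_succ (by omega), (by omega : n - m - 1 = t)]
  · obtain ⟨m', rfl⟩ : ∃ m', m = m' + 1 := ⟨m - 1, by omega⟩
    refine ⟨m', by omega, 1, one_mem _, ?_⟩
    rw [mul_one, d_succ (by omega), (by omega : n - m' - 1 = t), ← mul_assoc, q_sq,
      one_mul]
  · exact ⟨m, hm, q (n+1) (t-1), q_mem_range (by omega),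
      d_semiconj m hm t h (by omega)⟩

lemma step_cover {n : ℕ} (g : SymPres (n+1)) :
    ∃ m ≤ n, ∃ k ∈ (symStep n).range, g = dword n m * k := by
  have hg : g ∈ Subgroup.closure (G := SymPres (n+1))
      (Set.range (PresentedGroup.of : Fin ((n+1)-1) → SymPres (n+1))) := by
    have := Subgroup.mem_top (G := PresentedGroup (symRels (n+1))) g
    rw [← PresentedGroup.closure_range_of] at this; exact this
  have key : (∀ u, (∃ m ≤ n, ∃ k ∈ (symStep n).range, u = dword n m * k) →
        (∃ m ≤ n, ∃ k ∈ (symStep n).range, g * u = dword n m * k)) ∧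
      (∀ u, (∃ m ≤ n, ∃ k ∈ (symStep n).range, u = dword n m * k) →
        (∃ m ≤ n, ∃ k ∈ (symStep n).range, g⁻¹ * u = dword n m * k)) := by
    induction hg using Subgroup.closure_induction with
    | mem x hx =>
      obtain ⟨a, rfl⟩ := hx
      have hq : (PresentedGroup.of a : SymPres (n+1)) = q (n+1) (a : ℕ) :=
        (q_def (a : ℕ) a.isLt).symm
      have main : ∀ u, (∃ m ≤ n, ∃ k ∈ (symStep n).range, u = dword n m * k) →
          (∃ m ≤ n, ∃ k ∈ (symStep n).range,
            q (n+1) (a : ℕ) * u = dword n m * k) := by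
        rintro u ⟨m, hm, k, hk, rfl⟩
        have ha : (a : ℕ) < n := a.isLt
        obtain ⟨m', hm', k', hk', hEq⟩ := q_mul_coset ha hm
        exact ⟨m', hm', k' * k, mul_mem hk' hk, by rw [← mul_assoc, hEq, mul_assoc]⟩
      constructor
      · rw [hq]; exact main
      · rw [hq, q_inv]; exact main
    | one =>
      constructor <;> (rintro u hu; simpa using hu)
    | mul x y _ _ hx hy =>
      constructor
      · intro u hu
        rw [mul_assoc]
        exact hx.1 _ (hy.1 _ hu)
      · intro u hu
        rw [mul_inv_rev, mul_assoc]
        exact hy.2 _ (hx.2 _ hu)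
    | inv x _ hx =>
      refine ⟨fun u hu => hx.2 u hu, fun u hu => ?_⟩
      rw [inv_inv]
      exact hx.1 u hu
  have h1 : ∃ m ≤ n, ∃ k ∈ (symStep n).range, (1 : SymPres (n+1)) = dword n m * k :=
    ⟨0, by omega, 1, one_mem _, by rw [d_zero, mul_one]⟩
  simpa using key.1 1 h1

lemma symPres_bound : ∀ n : ℕ, Finite (SymPres n) ∧ Nat.card (SymPres n) ≤ n.factorial := by
  have triv : ∀ n : ℕ, n ≤ 1 → ∀ g : SymPres n, g = 1 := by
    intro n hn g
    induction g using PresentedGroup.induction_on with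
    | _ z =>
      have hz : z = 1 := by
        induction z using FreeGroup.induction_on with
        | C1 => rfl
        | of x => exact absurd x.2 (by omega)
        | inv_of x _ => exact absurd x.2 (by omega)
        | mul x y hx hy => rw [hx, hy, one_mul]
      rw [hz, map_one]; rfl
  intro n
  induction n with
  | zero =>
    have : Subsingleton (SymPres 0) := ⟨fun a b => by rw [triv 0 (by omega) a, triv 0 (by omega) b]⟩
    refine ⟨Finite.of_subsingleton, ?_⟩
    simp [Nat.card_eq_one_iff_unique.mpr ⟨this, ⟨1⟩⟩]
  | succ n ih =>
    obtain ⟨hfin, hcard⟩ := ih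
    have hKfin : Finite (symStep n).range :=
      Finite.of_surjective _ (symStep n).rangeRestrict_surjective
    set ψ : Fin (n+1) × (symStep n).range → SymPres (n+1) :=
      fun p => dword n (p.1 : ℕ) * (p.2 : SymPres (n+1)) with hψ
    have hsurj : Function.Surjective ψ := by
      intro g
      obtain ⟨m, hm, k, hk, rfl⟩ := step_cover g
      exact ⟨(⟨m, by omega⟩, ⟨k, hk⟩), rfl⟩
    have hfin1 : Finite (SymPres (n+1)) := Finite.of_surjective ψ hsurj
    refine ⟨hfin1, ?_⟩
    calc Nat.card (SymPres (n+1)) ≤ Nat.card (Fin (n+1) × (symStep n).range) :=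
          Nat.card_le_card_of_surjective ψ hsurj
      _ = (n+1) * Nat.card (symStep n).range := by
          rw [Nat.card_prod, Nat.card_eq_fintype_card, Fintype.card_fin]
      _ ≤ (n+1) * Nat.card (SymPres n) := by
          exact Nat.mul_le_mul_left _
            (Nat.card_le_card_of_surjective _ (symStep n).rangeRestrict_surjective)
      _ ≤ (n+1) * n.factorial := Nat.mul_le_mul_left _ hcard
      _ = (n+1).factorial := rfl

end MixedBraid
namespace MixedBraid

/-- The canonical map `SymPres n → Perm (Fin n)`. -/
def symPerm (n : ℕ) : SymPres n →* Equiv.Perm (Fin n) :=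
  PresentedGroup.toGroup
    (f := fun i : Fin (n - 1) =>
      Equiv.swap (⟨i.val, by have := i.isLt; omega⟩ : Fin n)
        (⟨i.val + 1, by have := i.isLt; omega⟩ : Fin n))
    (by
      rintro r ((⟨⟨i, hi⟩, ⟨j, hj⟩, hij, rfl⟩ | ⟨⟨i, hi⟩, ⟨j, hj⟩, hij, rfl⟩) | ⟨⟨i, hi⟩, rfl⟩) <;>
        simp only [map_mul, map_inv, FreeGroup.lift_apply_of, mul_inv_eq_one]
      · subst hij
        exact swap_braid (by simp only [ne_eq, Fin.mk.injEq, Fin.val_mk]; omega)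
          (by simp only [ne_eq, Fin.mk.injEq, Fin.val_mk]; omega)
          (by simp only [ne_eq, Fin.mk.injEq, Fin.val_mk]; omega)
      · simp only [Fin.val_mk] at hij
        exact (swap_commute (by simp only [ne_eq, Fin.mk.injEq, Fin.val_mk]; omega)
          (by simp only [ne_eq, Fin.mk.injEq, Fin.val_mk]; omega)
          (by simp only [ne_eq, Fin.mk.injEq, Fin.val_mk]; omega)
          (by simp only [ne_eq, Fin.mk.injEq, Fin.val_mk]; omega)).eq
      · exact Equiv.swap_mul_self _ _)

lemma symPerm_q {n : ℕ} (t : ℕ) (h : t < n - 1) :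
    symPerm n (q n t) =
      Equiv.swap (⟨t, by omega⟩ : Fin n) (⟨t+1, by omega⟩ : Fin n) := by
  rw [q_def t h]
  exact PresentedGroup.toGroup.of _

lemma swap_mem_symPerm_range {n : ℕ} (x y : Fin n) :
    Equiv.swap x y ∈ (symPerm n).range := by
  -- first: for i < j
  have main : ∀ d : ℕ, ∀ i j : ℕ, ∀ hi : i < n, ∀ hj : j < n, j = i + 1 + d →
      Equiv.swap (⟨i, hi⟩ : Fin n) (⟨j, hj⟩ : Fin n) ∈ (symPerm n).range := by
    intro d
    induction d with
    | zero =>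
      intro i j hi hj hij
      subst hij
      exact ⟨PresentedGroup.of ⟨i, by omega⟩, by
        rw [show (PresentedGroup.of ⟨i, by omega⟩ : SymPres n) = q n i from
          (q_def i (by omega)).symm, symPerm_q i (by omega)]⟩
    | succ d ihd =>
      intro i j hj' hj hij
      have hj1 : i + 1 + d < n := by omega
      have hlt : i + 1 + d < n - 1 := by omega
      -- swap (i, j) = swap(j-1, j) * swap(i, j-1) * swap(j-1, j)
      set a : Fin n := ⟨i, hj'⟩
      set b : Fin n := ⟨i + 1 + d, hj1⟩
      set c : Fin n := ⟨j, hj⟩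
      have hswap : Equiv.swap b c ∈ (symPerm n).range := by
        refine ⟨PresentedGroup.of ⟨i + 1 + d, hlt⟩, ?_⟩
        rw [show (PresentedGroup.of ⟨i+1+d, hlt⟩ : SymPres n) = q n (i+1+d) from
          (q_def (i+1+d) hlt).symm, symPerm_q (i+1+d) hlt]
        congr 1
        exact Fin.ext (by simp [c, hij]; omega)
      have hab : Equiv.swap a b ∈ (symPerm n).range := ihd i (i+1+d) hj' hj1 rfl
      have key : Equiv.swap a c = Equiv.swap b c * Equiv.swap a b * (Equiv.swap b c)⁻¹ := by
        rw [← Equiv.swap_apply_apply]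
        congr 1
        · exact (Equiv.swap_apply_of_ne_of_ne (by simp [a, b, c, Fin.ext_iff]; omega)
            (by simp [a, b, c, Fin.ext_iff]; omega)).symm
        · exact (Equiv.swap_apply_left _ _).symm
      rw [key]
      exact mul_mem (mul_mem hswap hab) (inv_mem hswap)
  rcases lt_trichotomy (x : ℕ) (y : ℕ) with h | h | h
  · have := main ((y : ℕ) - (x : ℕ) - 1) x y x.2 y.2 (by omega)
    simpa using this
  · have : x = y := Fin.ext h
    rw [this, Equiv.swap_self]
    exact one_mem _
  · have := main ((x : ℕ) - (y : ℕ) - 1) y x y.2 x.2 (by omega)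
    rw [Equiv.swap_comm]
    simpa using this

lemma symPerm_surjective (n : ℕ) : Function.Surjective (symPerm n) := by
  rw [← MonoidHom.range_eq_top]
  rw [eq_top_iff, ← Equiv.Perm.closure_isSwap, Subgroup.closure_le]
  rintro σ ⟨x, y, -, rfl⟩
  exact swap_mem_symPerm_range x y

lemma symPerm_bijective (n : ℕ) : Function.Bijective (symPerm n) := by
  have hfin := (symPres_bound n).1
  refine (symPerm_surjective n).bijective_of_nat_card_le ?_
  calc Nat.card (SymPres n) ≤ n.factorial := (symPres_bound n).2
    _ = Nat.card (Equiv.Perm (Fin n)) := by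
        rw [Nat.card_eq_fintype_card, Fintype.card_perm, Fintype.card_fin]

/-- The quotient map `BraidGroup n → SymPres n`. -/
def braidToSym (n : ℕ) : BraidGroup n →* SymPres n :=
  PresentedGroup.toGroup (f := fun i : Fin (n-1) => (PresentedGroup.of i : SymPres n)) (by
    intro r hr
    have hlift : FreeGroup.lift (fun i : Fin (n-1) => (PresentedGroup.of i : SymPres n)) r
        = PresentedGroup.mk (symRels n) r := by
      have : FreeGroup.lift (fun i : Fin (n-1) => (PresentedGroup.of i : SymPres n))
          = PresentedGroup.mk (symRels n) := by
        ext x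
        rfl
      rw [this]
    rw [hlift]
    exact q_rel_one (Or.inl hr))

lemma braidToSym_of {n : ℕ} (x : Fin (n-1)) :
    braidToSym n (PresentedGroup.of x) = PresentedGroup.of x :=
  PresentedGroup.toGroup.of _

instance HP_normal_inst (n : ℕ) : (HP n).Normal := HP_normal n

/-- The map `SymPres n → B_n / HP n`. -/
def symToQuot (n : ℕ) : SymPres n →* BraidGroup n ⧸ HP n :=
  PresentedGroup.toGroup
    (f := fun i : Fin (n-1) => (QuotientGroup.mk (s n (i : ℕ)) : BraidGroup n ⧸ HP n)) (by
    rintro r ((⟨i, j, hij, rfl⟩ | ⟨i, j, hij, rfl⟩) | ⟨i, rfl⟩) <;>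
      simp only [map_mul, map_inv, FreeGroup.lift_apply_of, mul_inv_eq_one,
        ← QuotientGroup.mk_mul]
    · have hj : (j : ℕ) < n - 1 := j.isLt
      exact congrArg _ (by rw [← hij]; exact braid_rel (by omega))
    · exact congrArg _ (comm_rel hij).eq
    · have hmem : (s n (i : ℕ)) * (s n (i : ℕ)) ∈ HP n := by
        have := Agen_mem (n := n) (i := (i : ℕ)) (j := (i : ℕ) + 1) (by omega)
          (by have := i.isLt; omega)
        rwa [Agen_base, sq] at this
      exact (QuotientGroup.eq_one_iff _).2 hmem)

lemma symToQuot_of {n : ℕ} (x : Fin (n-1)) :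
    symToQuot n (PresentedGroup.of x) = QuotientGroup.mk (s n (x : ℕ)) :=
  PresentedGroup.toGroup.of _

lemma symPerm_comp_braidToSym (n : ℕ) :
    (symPerm n).comp (braidToSym n) = braidPermHom n := by
  apply PresentedGroup.ext
  intro x
  show (symPerm n) ((braidToSym n) (PresentedGroup.of x)) = (braidPermHom n) (PresentedGroup.of x)
  rw [braidToSym_of]
  rw [show (symPerm n) (PresentedGroup.of x) = _ from PresentedGroup.toGroup.of _,
    show (braidPermHom n) (PresentedGroup.of x) = _ from PresentedGroup.toGroup.of _]

lemma symToQuot_comp_braidToSym (n : ℕ) :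
    (symToQuot n).comp (braidToSym n) = QuotientGroup.mk' (HP n) := by
  apply PresentedGroup.ext
  intro x
  show (symToQuot n) ((braidToSym n) (PresentedGroup.of x))
      = (QuotientGroup.mk' (HP n)) (PresentedGroup.of x)
  rw [braidToSym_of, symToQuot_of]
  show (QuotientGroup.mk (s n (x : ℕ)) : BraidGroup n ⧸ HP n) = QuotientGroup.mk (PresentedGroup.of x : BraidGroup n)
  congr 1
  rw [s_def (x : ℕ) x.isLt]

lemma ker_le_HP (n : ℕ) : (braidPermHom n).ker ≤ HP n := by
  intro β hβ
  have h1 : symPerm n (braidToSym n β) = 1 := by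
    have := congrArg (fun f => f β) (symPerm_comp_braidToSym n)
    simp only [MonoidHom.comp_apply] at this
    rw [this]
    exact hβ
  have h2 : braidToSym n β = 1 :=
    (symPerm_bijective n).1 (by rw [h1, map_one])
  have h3 : QuotientGroup.mk' (HP n) β = 1 := by
    have := congrArg (fun f => f β) (symToQuot_comp_braidToSym n)
    simp only [MonoidHom.comp_apply] at this
    rw [← this, h2, map_one]
  exact (QuotientGroup.eq_one_iff β).1 (by rw [← QuotientGroup.mk'_apply]; exact h3)

end MixedBraid
namespace MixedBraid

lemma perm_w_fix {n i j x : ℕ} (hx : x ≤ i) (hxn : x < n) :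
    braidPermHom n (wword n i j) ⟨x, hxn⟩ = ⟨x, hxn⟩ := by
  induction j with
  | zero => rw [w_nil i 0 (by omega)]; simp
  | succ j ih =>
    by_cases hj : j ≤ i
    · rw [w_nil i (j+1) (by omega)]; simp
    · rw [w_succ i j (by omega), map_mul]
      simp only [Equiv.Perm.mul_apply, ih]
      by_cases hjn : j < n - 1
      · rw [perm_s j hjn]
        exact Equiv.swap_apply_of_ne_of_ne (by simp [Fin.ext_iff]; omega)
          (by simp [Fin.ext_iff]; omega)
      · rw [s_oob j hjn, map_one]; rfl

lemma perm_w_top {n i j : ℕ} (hij : i + 1 ≤ j) (hjn : j < n) :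
    braidPermHom n (wword n i j) ⟨i+1, by omega⟩ = ⟨j, hjn⟩ := by
  induction j, hij using Nat.le_induction with
  | base => rw [w_nil i (i+1) le_rfl]; simp
  | succ j hj ih =>
    rw [w_succ i j hj, map_mul]
    simp only [Equiv.Perm.mul_apply]
    rw [ih (by omega), perm_s j (by omega)]
    have : (⟨j, by omega⟩ : Fin n) = ⟨j, by omega⟩ := rfl
    rw [show (Equiv.swap (⟨j, by omega⟩ : Fin n) ⟨j+1, by omega⟩) ⟨j, by omega⟩
        = ⟨j+1, by omega⟩ from Equiv.swap_apply_left _ _]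

lemma perm_aband {n : ℕ} {i j : ℕ} (hij : i < j) (hjn : j < n) :
    braidPermHom n (aband n i j)
      = Equiv.swap (⟨i, by omega⟩ : Fin n) (⟨j, hjn⟩ : Fin n) := by
  have hin : i < n := by omega
  have h1 : braidPermHom n (wword n i j) ⟨i, hin⟩ = ⟨i, hin⟩ := perm_w_fix le_rfl hin
  have h2 : braidPermHom n (wword n i j) ⟨i+1, by omega⟩ = ⟨j, hjn⟩ :=
    perm_w_top hij hjn
  rw [aband, map_mul, map_mul, map_inv, perm_s i (by omega)]
  rw [← Equiv.swap_apply_apply, h1, h2]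

lemma perm_Agen {n : ℕ} {i j : ℕ} (hij : i < j) (hjn : j < n) :
    braidPermHom n (Agen n i j) = 1 := by
  rw [Agen, map_pow, perm_aband hij hjn, sq, Equiv.swap_mul_self]

lemma HP_le_ker (n : ℕ) : HP n ≤ (braidPermHom n).ker := by
  rw [HP, Subgroup.closure_le]
  rintro x ⟨i, j, hij, hj, rfl⟩
  exact MonoidHom.mem_ker.2 (perm_Agen hij (by omega))

theorem HP_eq_ker (n : ℕ) : HP n = (braidPermHom n).ker :=
  le_antisymm (HP_le_ker n) (ker_le_HP n)

end MixedBraid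
namespace MixedBraid

/-- Mixed generator for an ordered pair of strands: the band generator if the strands
are in the same block, and the squared band generator otherwise. -/
noncomputable def genMix {k : ℕ} (P : Setoid (Fin k)) (p : Fin k × Fin k) : BraidGroup k :=
  letI : Decidable (P.r p.1 p.2) := Classical.dec _
  if P.r p.1 p.2 then aband k (p.1 : ℕ) (p.2 : ℕ) else Agen k (p.1 : ℕ) (p.2 : ℕ)

lemma genMix_pos {k : ℕ} {P : Setoid (Fin k)} {p : Fin k × Fin k} (h : P.r p.1 p.2) :
    genMix P p = aband k (p.1 : ℕ) (p.2 : ℕ) := by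
  simp [genMix, h]

lemma genMix_neg {k : ℕ} {P : Setoid (Fin k)} {p : Fin k × Fin k} (h : ¬ P.r p.1 p.2) :
    genMix P p = Agen k (p.1 : ℕ) (p.2 : ℕ) := by
  simp [genMix, h]

/-- The set of ordered pairs `(i,j)` with `i < j` in `Fin k`. -/
def pairsT (k : ℕ) : Finset (Fin k × Fin k) :=
  Finset.univ.biUnion (fun j : Fin k => (Finset.Iio j).image (fun i => (i, j)))

lemma mem_pairsT {k : ℕ} {p : Fin k × Fin k} : p ∈ pairsT k ↔ p.1 < p.2 := by
  obtain ⟨a, b⟩ := p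
  simp only [pairsT, Finset.mem_biUnion, Finset.mem_image, Finset.mem_Iio,
    Finset.mem_univ, true_and]
  constructor
  · rintro ⟨j, i, hij, h⟩
    obtain ⟨rfl, rfl⟩ := Prod.mk.injEq .. ▸ h
    exact hij
  · intro h
    exact ⟨b, a, h, rfl⟩

lemma card_pairsT (k : ℕ) : (pairsT k).card = k * (k - 1) / 2 := by
  rw [pairsT, Finset.card_biUnion]
  · have : ∀ j : Fin k, ((Finset.Iio j).image (fun i => (i, j))).card = (j : ℕ) := by
      intro j
      rw [Finset.card_image_of_injective _ (fun a b hab => (Prod.mk.injEq ..▸ hab).1),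
        Fin.card_Iio]
    rw [Finset.sum_congr rfl (fun j _ => this j)]
    rw [Fin.sum_univ_eq_sum_range (fun m => m) k, Finset.sum_range_id]
  · intro a _ b _ hab
    simp only [Finset.disjoint_left, Finset.mem_image, Finset.mem_Iio]
    rintro p ⟨i, hi, rfl⟩ ⟨i', hi', h⟩
    exact hab ((Prod.mk.injEq .. ▸ h).2.symm)

lemma perm_aband_fin {k : ℕ} {a b : Fin k} (hab : a < b) :
    braidPermHom k (aband k (a : ℕ) (b : ℕ)) = Equiv.swap a b := by
  have := perm_aband (n := k) (i := (a : ℕ)) (j := (b : ℕ)) hab b.isLt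
  simpa using this

lemma genMix_mem_mixed {k : ℕ} (P : Setoid (Fin k)) {p : Fin k × Fin k}
    (hp : p.1 < p.2) : genMix P p ∈ mixedBraidGroup P := by
  by_cases hr : P.r p.1 p.2
  · rw [genMix_pos hr]
    intro x
    rw [perm_aband_fin hp]
    rcases eq_or_ne x p.1 with rfl | h1
    · rw [Equiv.swap_apply_left]
      exact P.symm hr
    rcases eq_or_ne x p.2 with rfl | h2
    · rw [Equiv.swap_apply_right]
      exact hr
    · rw [Equiv.swap_apply_of_ne_of_ne h1 h2]
  · rw [genMix_neg hr]
    intro x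
    rw [perm_Agen (Fin.lt_def.1 hp) p.2.isLt]
    exact P.refl x

end MixedBraid

open MixedBraid in
/-- For any partition `P` of the `k` strands, the mixed braid group `B_P`
can be generated by at most `k(k-1)/2` elements. -/
theorem mixedBraidGroup_small_generating_set (k : ℕ) (hk : 1 ≤ k) (P : Setoid (Fin k)) :
    ∃ S : Set (BraidGroup k),
      S ⊆ ↑(mixedBraidGroup P) ∧
      Subgroup.closure S = mixedBraidGroup P ∧
      S.Finite ∧ S.ncard ≤ k * (k - 1) / 2 := by
  classical
  set Sf : Finset (BraidGroup k) := (pairsT k).image (genMix P) with hSf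
  have hsub : (↑Sf : Set (BraidGroup k)) ⊆ ↑(mixedBraidGroup P) := by
    intro x hx
    obtain ⟨p, hp, rfl⟩ := Finset.mem_image.1 (Finset.mem_coe.1 hx)
    exact genMix_mem_mixed P (mem_pairsT.1 hp)
  have hHP : HP k ≤ Subgroup.closure (↑Sf : Set (BraidGroup k)) := by
    rw [HP, Subgroup.closure_le]
    rintro x ⟨i, j, hij, hj, rfl⟩
    have hjk : j < k := by omega
    have hik : i < k := by omega
    set p : Fin k × Fin k := (⟨i, hik⟩, ⟨j, hjk⟩) with hp
    have hplt : p.1 < p.2 := by simp only [p, Fin.mk_lt_mk]; omega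
    have hpmem : genMix P p ∈ Sf :=
      Finset.mem_image_of_mem _ (mem_pairsT.2 hplt)
    by_cases hr : P.r p.1 p.2
    · have hAg : Agen k i j = (genMix P p) ^ 2 := by rw [genMix_pos hr]; rfl
      rw [hAg]
      exact pow_mem (Subgroup.subset_closure (Finset.mem_coe.2 hpmem)) 2
    · have hAg : Agen k i j = genMix P p := by rw [genMix_neg hr]
      rw [hAg]
      exact Subgroup.subset_closure (Finset.mem_coe.2 hpmem)
  have hmain : mixedBraidGroup P ≤ Subgroup.closure (↑Sf : Set (BraidGroup k)) := by
    intro β hβ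
    have hβ' : ∀ x, P.r (braidPermHom k β x) x := hβ
    set S' : Set (Equiv.Perm (Fin k)) :=
      {σ | ∃ i j : Fin k, i ≠ j ∧ P.r i j ∧ σ = Equiv.swap i j} with hS'
    have hswaps : ∀ σ ∈ S', σ.IsSwap := by
      rintro σ ⟨i, j, hne, -, rfl⟩; exact ⟨i, j, hne, rfl⟩
    have hππ : braidPermHom k β ∈ Subgroup.closure S' := by
      rw [mem_closure_isSwap hswaps]
      refine ⟨Set.toFinite _, fun x => ?_⟩
      rcases eq_or_ne (braidPermHom k β x) x with heq | hne
      · rw [heq]; exact MulAction.mem_orbit_self x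
      · refine ⟨⟨Equiv.swap x (braidPermHom k β x), Subgroup.subset_closure ?_⟩,
          Equiv.swap_apply_left _ _⟩
        exact ⟨x, braidPermHom k β x, hne.symm, P.symm (hβ' x), rfl⟩
    have hmap : Subgroup.closure S'
        ≤ Subgroup.map (braidPermHom k) (Subgroup.closure (↑Sf : Set (BraidGroup k))) := by
      rw [Subgroup.closure_le]
      rintro σ ⟨i, j, hne, hr, rfl⟩
      rcases lt_trichotomy i j with hlt | heq | hgt
      · refine Subgroup.mem_map.2 ⟨genMix P (i, j), Subgroup.subset_closure
          (Finset.mem_coe.2 (Finset.mem_image_of_mem _ (mem_pairsT.2 hlt))), ?_⟩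
        rw [genMix_pos hr]
        exact perm_aband_fin hlt
      · exact absurd heq hne
      · refine Subgroup.mem_map.2 ⟨genMix P (j, i), Subgroup.subset_closure
          (Finset.mem_coe.2 (Finset.mem_image_of_mem _ (mem_pairsT.2 hgt))), ?_⟩
        rw [genMix_pos (P.symm hr)]
        rw [perm_aband_fin hgt, Equiv.swap_comm]
    obtain ⟨γ, hγ, hπγ⟩ := Subgroup.mem_map.1 (hmap hππ)
    have hker : β * γ⁻¹ ∈ HP k := by
      rw [HP_eq_ker]
      exact MonoidHom.mem_ker.2 (by rw [map_mul, map_inv, hπγ, mul_inv_cancel])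
    have hβγ : β = (β * γ⁻¹) * γ := by group
    rw [hβγ]
    exact mul_mem (hHP hker) hγ
  refine ⟨↑Sf, hsub, ?_, Finset.finite_toSet _, ?_⟩
  · exact le_antisymm ((Subgroup.closure_le _).2 hsub) hmain
  · rw [Set.ncard_coe_finset]
    calc Sf.card ≤ (pairsT k).card := Finset.card_image_le
      _ = k * (k - 1) / 2 := card_pairsT k
end

section
/- The direct product group B_3 × ℤ is generated by the two elements (σ_1σ_2, t) and (σ_1σ_2σ_1, t), where t denotes a generator of ℤ. In particular, B_3 × ℤ can be generated by two elements. -/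
private lemma braidGen3_1 : braidGen 3 1 = (PresentedGroup.of (0 : Fin (3-1)) : BraidGroup 3) := by
  rw [braidGen]; exact dif_pos (by norm_num)

private lemma braidGen3_2 : braidGen 3 2 = (PresentedGroup.of (1 : Fin (3-1)) : BraidGroup 3) := by
  rw [braidGen]; exact dif_pos (by norm_num)

private lemma braid_rel3 :
    braidGen 3 1 * braidGen 3 2 * braidGen 3 1 = braidGen 3 2 * braidGen 3 1 * braidGen 3 2 := by
  rw [braidGen3_1, braidGen3_2]
  have hr : (FreeGroup.of (0 : Fin (3-1)) * FreeGroup.of 1 * FreeGroup.of 0 *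
      (FreeGroup.of 1 * FreeGroup.of 0 * FreeGroup.of 1)⁻¹) ∈ braidRels 3 :=
    Or.inl ⟨0, 1, by norm_num, rfl⟩
  have h1 : (QuotientGroup.mk (FreeGroup.of (0 : Fin (3-1)) * FreeGroup.of 1 * FreeGroup.of 0 *
      (FreeGroup.of 1 * FreeGroup.of 0 * FreeGroup.of 1)⁻¹) :
      PresentedGroup (braidRels 3)) = 1 := by
    rw [QuotientGroup.eq_one_iff]
    exact Subgroup.subset_normalClosure hr
  have h2 := h1
  rw [show ((QuotientGroup.mk (FreeGroup.of (0 : Fin (3-1)) * FreeGroup.of 1 * FreeGroup.of 0 *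
      (FreeGroup.of 1 * FreeGroup.of 0 * FreeGroup.of 1)⁻¹)) : PresentedGroup (braidRels 3)) =
      PresentedGroup.of 0 * PresentedGroup.of 1 * PresentedGroup.of 0 *
      (PresentedGroup.of 1 * PresentedGroup.of 0 * PresentedGroup.of 1)⁻¹ from rfl] at h2
  group at h2 ⊢
  exact mul_inv_eq_one.mp h2

/-- `B_3 × ℤ` is generated by the two elements `(σ_1 σ_2, t)` and
`(σ_1 σ_2 σ_1, t)`. -/
theorem b3_prod_int_two_generators :
    Subgroup.closure
      {((braidGen 3 1 * braidGen 3 2, Multiplicative.ofAdd (1 : ℤ)) :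
          BraidGroup 3 × Multiplicative ℤ),
        ((braidGen 3 1 * braidGen 3 2 * braidGen 3 1, Multiplicative.ofAdd (1 : ℤ)) :
          BraidGroup 3 × Multiplicative ℤ)} =
      (⊤ : Subgroup (BraidGroup 3 × Multiplicative ℤ)) := by
  have h := braid_rel3
  rw [eq_top_iff]
  set g1 := braidGen 3 1 with hg1
  set g2 := braidGen 3 2 with hg2
  set t := Multiplicative.ofAdd (1 : ℤ) with htt
  set H := Subgroup.closure
      {((g1 * g2, t) : BraidGroup 3 × Multiplicative ℤ), (g1 * g2 * g1, t)} with hH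
  rintro ⟨g, z⟩ -
  have hx : ((g1 * g2, t) : BraidGroup 3 × Multiplicative ℤ) ∈ H :=
    Subgroup.subset_closure (Set.mem_insert _ _)
  have hy : ((g1 * g2 * g1, t) : BraidGroup 3 × Multiplicative ℤ) ∈ H :=
    Subgroup.subset_closure (Set.mem_insert_of_mem _ rfl)
  have hs1 : ((g1, 1) : BraidGroup 3 × Multiplicative ℤ) ∈ H := by
    have hm := H.mul_mem (H.inv_mem hx) hy
    have e : ((g1 * g2, t) : BraidGroup 3 × Multiplicative ℤ)⁻¹ * (g1 * g2 * g1, t)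
        = (g1, 1) := by
      ext
      · show (g1 * g2)⁻¹ * (g1 * g2 * g1) = g1; group
      · show t⁻¹ * t = 1; group
    rwa [e] at hm
  have hcube : (g1 * g2) ^ 3 = (g1 * g2 * g1) ^ 2 := by
    calc (g1 * g2) ^ 3 = (g1 * g2 * g1) * (g2 * g1 * g2) := by simp [pow_succ, mul_assoc]
      _ = (g1 * g2 * g1) * (g1 * g2 * g1) := by rw [← h]
      _ = (g1 * g2 * g1) ^ 2 := by simp [pow_two, mul_assoc]
  have ht : ((1, t) : BraidGroup 3 × Multiplicative ℤ) ∈ H := by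
    have hm := H.mul_mem (H.pow_mem hx 3) (H.inv_mem (H.pow_mem hy 2))
    have e : ((g1 * g2, t) : BraidGroup 3 × Multiplicative ℤ) ^ 3
        * (((g1 * g2 * g1, t) : BraidGroup 3 × Multiplicative ℤ) ^ 2)⁻¹ = (1, t) := by
      ext
      · show (g1 * g2) ^ 3 * ((g1 * g2 * g1) ^ 2)⁻¹ = 1
        rw [hcube]; group
      · show t ^ 3 * (t ^ 2)⁻¹ = t; group
    rwa [e] at hm
  have hs2 : ((g2, 1) : BraidGroup 3 × Multiplicative ℤ) ∈ H := by
    have hm := H.mul_mem (H.mul_mem (H.inv_mem hs1) hx) (H.inv_mem ht)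
    have e : ((g1, 1) : BraidGroup 3 × Multiplicative ℤ)⁻¹ * (g1 * g2, t) * ((1, t))⁻¹
        = (g2, 1) := by
      ext
      · show g1⁻¹ * (g1 * g2) * 1⁻¹ = g2; group
      · show 1⁻¹ * t * t⁻¹ = 1; group
    rwa [e] at hm
  have hz : (((1 : BraidGroup 3), z) : BraidGroup 3 × Multiplicative ℤ) ∈ H := by
    have hm := H.zpow_mem ht (Multiplicative.toAdd z)
    have e : ((1, t) : BraidGroup 3 × Multiplicative ℤ) ^ (Multiplicative.toAdd z) = (1, z) := by
      ext
      · show (1 : BraidGroup 3) ^ (Multiplicative.toAdd z) = 1; simp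
      · show t ^ (Multiplicative.toAdd z) = z
        rw [htt, ← ofAdd_zsmul, smul_eq_mul, mul_one]; rfl
    rwa [e] at hm
  have hg : ((g, 1) : BraidGroup 3 × Multiplicative ℤ) ∈ H := by
    have hle : (⊤ : Subgroup (BraidGroup 3)) ≤
        H.comap (MonoidHom.inl (BraidGroup 3) (Multiplicative ℤ)) := by
      rw [show (⊤ : Subgroup (BraidGroup 3)) = @Subgroup.closure (BraidGroup 3) _ (Set.range (PresentedGroup.of : Fin (3 - 1) → BraidGroup 3)) from (PresentedGroup.closure_range_of (braidRels 3)).symm, Subgroup.closure_le]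
      rintro _ ⟨i, rfl⟩
      fin_cases i
      · have : (PresentedGroup.of (0 : Fin (3 - 1)) : BraidGroup 3) = g1 := by
          rw [hg1, braidGen3_1]
        simpa [Subgroup.mem_comap, this] using hs1
      · have : (PresentedGroup.of (1 : Fin (3 - 1)) : BraidGroup 3) = g2 := by
          rw [hg2, braidGen3_2]
        simpa [Subgroup.mem_comap, this] using hs2
    exact hle trivial
  have e : ((g, z) : BraidGroup 3 × Multiplicative ℤ) = (g, 1) * (1, z) := by
    ext
    · show g = g * 1; group
    · show z = 1 * z; group
  rw [e]
  exact H.mul_mem hg hz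
end
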